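/- With J, H₁, H₂ as above, set M_j(λ) = I + λ δ_{j+1}·[[0,0],[−1,0]] for j odd and M_j(λ) = I + λ δ_{j+1}·[[0,1],[0,0]] for j even, where δ_j > 0. Then the product M_{2j−2}(λ)···M_2(λ)M_1(λ) is a matrix polynomial in λ whose (1,1) entry has degree 2j−2 with leading coefficient (−1)^{j+1} δ_{2j−1} δ_{2j−2} ··· δ_2. -/

import Mathlib

open Polynomial

private lemma list_step' (M : ℕ → Matrix (Fin 2) (Fin 2) (Polynomial ℂ)) (m : ℕ) :
    ((List.range (m+1)).map fun i => M (m+1-i)).prod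
      = M (m+1) * ((List.range m).map fun i => M (m-i)).prod := by
  rw [List.range_succ_eq_map]
  simp [List.map_map, Function.comp_def, Nat.succ_sub_succ]

private lemma ndeg_CXmul (c : ℂ) (p : Polynomial ℂ) :
    (C c * (X * p)).natDegree ≤ p.natDegree + 1 := by
  have h1 : (X * p).natDegree ≤ 1 + p.natDegree :=
    natDegree_mul_le.trans (by rw [natDegree_X])
  refine natDegree_mul_le.trans ?_
  simpa [natDegree_C, Nat.add_comm] using h1

private lemma aux_key (δ : ℕ → ℝ)
    (M : ℕ → Matrix (Fin 2) (Fin 2) (Polynomial ℂ))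
    (hM : ∀ k : ℕ, M k = 1 + (Polynomial.C ((δ (k + 1) : ℝ) : ℂ) * Polynomial.X) •
      (if Odd k then (!![0, 0; -1, 0] : Matrix (Fin 2) (Fin 2) (Polynomial ℂ))
        else !![0, 1; 0, 0])) (t : ℕ) :
    (((List.range (2*t)).map fun i => M (2*t - i)).prod 0 0).natDegree ≤ 2*t ∧
    (((List.range (2*t)).map fun i => M (2*t - i)).prod 0 0).coeff (2*t)
      = (-1)^t * ∏ n ∈ Finset.Icc 2 (2*t+1), ((δ n : ℝ) : ℂ) ∧
    (((List.range (2*t)).map fun i => M (2*t - i)).prod 1 0).natDegree ≤ 2*t := by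
  induction t with
  | zero => simp [Matrix.one_apply]
  | succ t ih =>
    obtain ⟨hp, hc, hq⟩ := ih
    set P := ((List.range (2*t)).map fun i => M (2*t - i)).prod with hP
    have hodd : M (2*t+1) = !![1, 0; -(C ((δ (2*t+2) : ℝ) : ℂ) * X), 1] := by
      rw [hM, if_pos ⟨t, by ring⟩]
      ext i j; fin_cases i <;> fin_cases j <;> simp [Matrix.one_apply]
    have heven : M (2*t+2) = !![1, C ((δ (2*t+3) : ℝ) : ℂ) * X; 0, 1] := by
      rw [hM, if_neg (by rintro ⟨k, hk⟩; omega)]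
      ext i j; fin_cases i <;> fin_cases j <;> simp [Matrix.one_apply]
    have hrw : ((List.range (2*(t+1))).map fun i => M (2*(t+1) - i)).prod
        = M (2*t+2) * (M (2*t+1) * P) := by
      have e1 : 2*(t+1) = (2*t+1)+1 := by ring
      rw [e1, list_step', list_step']
    have h00 : (((List.range (2*(t+1))).map fun i => M (2*(t+1) - i)).prod) 0 0
        = P 0 0 + C ((δ (2*t+3) : ℝ) : ℂ) *
            (X * (-(C ((δ (2*t+2) : ℝ) : ℂ) * (X * P 0 0)) + P 1 0)) := by
      rw [hrw, hodd, heven]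
      simp [Matrix.mul_apply, Fin.sum_univ_two, Matrix.vecMul, dotProduct,
        Matrix.vecHead, Matrix.vecTail]
      ring
    have h10 : (((List.range (2*(t+1))).map fun i => M (2*(t+1) - i)).prod) 1 0
        = -(C ((δ (2*t+2) : ℝ) : ℂ) * (X * P 0 0)) + P 1 0 := by
      rw [hrw, hodd, heven]
      simp [Matrix.mul_apply, Fin.sum_univ_two, Matrix.vecMul, dotProduct,
        Matrix.vecHead, Matrix.vecTail]
      ring
    have hq' : (-(C ((δ (2*t+2) : ℝ) : ℂ) * (X * P 0 0)) + P 1 0).natDegree ≤ 2*t+1 := by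
      refine (natDegree_add_le _ _).trans (max_le ?_ (hq.trans (by omega)))
      rw [natDegree_neg]
      exact (ndeg_CXmul _ _).trans (by omega)
    refine ⟨?_, ?_, ?_⟩
    · rw [h00]
      refine (natDegree_add_le _ _).trans (max_le (hp.trans (by omega)) ?_)
      refine (ndeg_CXmul _ _).trans ?_
      have := hq'
      omega
    · rw [h00]
      have e2 : 2*(t+1) = (2*t+1)+1 := by ring
      rw [coeff_add, coeff_C_mul, e2, coeff_X_mul, coeff_add, coeff_neg, coeff_C_mul,
        coeff_X_mul, hc,
        coeff_eq_zero_of_natDegree_lt (lt_of_le_of_lt hp (by omega)),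
        coeff_eq_zero_of_natDegree_lt (lt_of_le_of_lt hq (by omega))]
      have e3 : Finset.Icc 2 (2*t+1+1+1)
          = insert (2*t+3) (insert (2*t+2) (Finset.Icc 2 (2*t+1))) := by
        ext n; simp only [Finset.mem_Icc, Finset.mem_insert]; omega
      rw [e3, Finset.prod_insert (by simp [Finset.mem_Icc]),
        Finset.prod_insert (by simp [Finset.mem_Icc])]
      ring
    · rw [h10]
      exact hq'.trans (by omega)

/-- With `M_k(λ) = I + λ δ_{k+1} [[0,0],[−1,0]]` for `k` odd and
`M_k(λ) = I + λ δ_{k+1} [[0,1],[0,0]]` for `k` even (`δ_n > 0`), the `(1,1)` entry of the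
product `M_{2j−2}(λ) ⋯ M_2(λ) M_1(λ)` is a polynomial in `λ` of degree `2j−2` with
leading coefficient `(−1)^{j+1} δ_{2j−1} δ_{2j−2} ⋯ δ_2`. -/
theorem product_monodromy_top_left_degree_leadingCoeff
    (j : ℕ) (hj : 1 ≤ j) (δ : ℕ → ℝ)
    (hδ : ∀ n ∈ Finset.Icc 2 (2 * j - 1), 0 < δ n)
    (M : ℕ → Matrix (Fin 2) (Fin 2) (Polynomial ℂ))
    (hM : ∀ k : ℕ, M k = 1 + (Polynomial.C ((δ (k + 1) : ℝ) : ℂ) * Polynomial.X) •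
      (if Odd k then (!![0, 0; -1, 0] : Matrix (Fin 2) (Fin 2) (Polynomial ℂ))
        else !![0, 1; 0, 0])) :
    (((List.range (2 * j - 2)).map fun i => M (2 * j - 2 - i)).prod 0 0).natDegree
        = 2 * j - 2 ∧
    (((List.range (2 * j - 2)).map fun i => M (2 * j - 2 - i)).prod 0 0).leadingCoeff
        = (-1 : ℂ) ^ (j + 1) * ∏ n ∈ Finset.Icc 2 (2 * j - 1), ((δ n : ℝ) : ℂ) := by
  obtain ⟨t, ht⟩ : ∃ t, j = t + 1 := ⟨j - 1, by omega⟩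
  subst ht
  have e1 : 2 * (t+1) - 2 = 2 * t := by omega
  have e2 : 2 * (t+1) - 1 = 2 * t + 1 := by omega
  rw [e1, e2] at *
  obtain ⟨hp, hc, -⟩ := aux_key δ M hM t
  have hprod : (∏ n ∈ Finset.Icc 2 (2*t+1), ((δ n : ℝ) : ℂ)) ≠ 0 := by
    refine Finset.prod_ne_zero_iff.2 fun n hn => ?_
    exact_mod_cast ne_of_gt (hδ n hn)
  have hcne : (((List.range (2*t)).map fun i => M (2*t - i)).prod 0 0).coeff (2*t) ≠ 0 := by
    rw [hc]
    exact mul_ne_zero (pow_ne_zero _ (by norm_num)) hprod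
  have hdeg : (((List.range (2*t)).map fun i => M (2*t - i)).prod 0 0).natDegree = 2*t :=
    le_antisymm hp (le_natDegree_of_ne_zero hcne)
  refine ⟨hdeg, ?_⟩
  rw [Polynomial.leadingCoeff, hdeg, hc]
  have : ((-1 : ℂ)) ^ (t + 1 + 1) = (-1) ^ t := by
    rw [pow_succ, pow_succ]; ring
  rw [this]
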